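/- Let A = (a₁,a₂), B = (b₁,b₂), C = (c₁,c₂), D = (d₁,d₂) ∈ ℝ² be pairwise distinct with A, B, C not collinear, let k_A, k_B, k_C, k_D be nonzero reals, and set Δ = (a₁−b₁)(a₂−c₂) − (a₂−b₂)(a₁−c₁) (so Δ ≠ 0). If (X, Y) is a real solution of System (*) with X = (x₁, x₂), then k_T‖Y−T‖² ≠ 1 for all T (so Γ_T(Y) is well defined) and: x₁ = (1/(2Δ))·[(Γ_B(Y)−Γ_A(Y))(a₂−c₂) − (a₂−b₂)(Γ_C(Y)−Γ_A(Y))] and x₂ = (1/(2Δ))·[(a₁−b₁)(Γ_C(Y)−Γ_A(Y)) − (Γ_B(Y)−Γ_A(Y))(a₁−c₁)]. -/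

import Mathlib

/-- The squared Euclidean "norm" on `ℝ²`: sum of squares of the coordinates. -/
def sq2 (u : ℝ × ℝ) : ℝ := u.1 ^ 2 + u.2 ^ 2

/-- `(X, Y) ∈ ℝ² × ℝ²` is a real solution of System (*) for the configuration
`A, B, C, D` with constants `kA, kB, kC, kD`. -/
def IsRealSol (A B C D : ℝ × ℝ) (kA kB kC kD : ℝ) (X Y : ℝ × ℝ) : Prop :=
  (X ≠ A ∧ X ≠ B ∧ X ≠ C ∧ X ≠ D) ∧
  (Y ≠ A ∧ Y ≠ B ∧ Y ≠ C ∧ Y ≠ D) ∧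
  1 / sq2 (X - A) + 1 / sq2 (Y - A) = kA ∧
  1 / sq2 (X - B) + 1 / sq2 (Y - B) = kB ∧
  1 / sq2 (X - C) + 1 / sq2 (Y - C) = kC ∧
  1 / sq2 (X - D) + 1 / sq2 (Y - D) = kD

/-- The rational function `Γ_T(Y) = ‖Y−T‖²/(k_T‖Y−T‖² − 1) − ‖T‖²`. -/
noncomputable def Gamma (k : ℝ) (T Y : ℝ × ℝ) : ℝ :=
  sq2 (Y - T) / (k * sq2 (Y - T) - 1) - sq2 T


lemma sq2_ne_zero {u : ℝ × ℝ} (h : u ≠ 0) : sq2 u ≠ 0 := by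
  have h1 : u.1 ≠ 0 ∨ u.2 ≠ 0 := by
    by_contra hc; push_neg at hc; exact h (Prod.ext hc.1 hc.2)
  unfold sq2
  rcases h1 with h1 | h1 <;> positivity

lemma key (k p q : ℝ) (hp : p ≠ 0) (hq : q ≠ 0) (h : 1/p + 1/q = k) :
    k * q - 1 ≠ 0 ∧ q / (k * q - 1) = p := by
  have hkq : k * q - 1 = q / p := by
    field_simp at h ⊢
    linarith
  have hne : k * q - 1 ≠ 0 := by rw [hkq]; exact div_ne_zero hq hp
  refine ⟨hne, ?_⟩
  rw [hkq]
  field_simp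

lemma det_ne (a1 a2 b1 b2 c1 c2 : ℝ)
    (habc : ¬ Collinear ℝ ({(a1, a2), (b1, b2), (c1, c2)} : Set (ℝ × ℝ))) :
    (a1 - b1) * (a2 - c2) - (a2 - b2) * (a1 - c1) ≠ 0 := by
  intro hΔ
  apply habc
  by_cases hu : b1 - a1 = 0 ∧ b2 - a2 = 0
  · have hab : ((b1, b2) : ℝ × ℝ) = (a1, a2) := by
      simp only [Prod.mk.injEq]; constructor <;> linarith [hu.1, hu.2]
    rw [hab, Set.insert_comm, Set.insert_idem]
    exact collinear_pair ℝ _ _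
  · push_neg at hu
    apply (collinear_iff_of_mem (Set.mem_insert _ _)).mpr
    refine ⟨(b1 - a1, b2 - a2), ?_⟩
    intro p hp
    rcases hp with h | h | h
    · exact ⟨0, by simp [h]⟩
    · refine ⟨1, ?_⟩
      simp only [h, vadd_eq_add, Prod.smul_mk, smul_eq_mul, one_mul, vadd_eq_add, Prod.mk_add_mk, Prod.mk.injEq]
      constructor <;> ring
    · simp only [Set.mem_singleton_iff] at h
      by_cases h1 : b1 - a1 = 0
      · have h2 := hu h1
        refine ⟨(c2 - a2) / (b2 - a2), ?_⟩
        simp only [h, vadd_eq_add, Prod.smul_mk, smul_eq_mul, vadd_eq_add, Prod.mk_add_mk, Prod.mk.injEq]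
        constructor
        · field_simp
          nlinarith [hΔ]
        · field_simp
          ring
      · refine ⟨(c1 - a1) / (b1 - a1), ?_⟩
        simp only [h, vadd_eq_add, Prod.smul_mk, smul_eq_mul, vadd_eq_add, Prod.mk_add_mk, Prod.mk.injEq]
        constructor
        · field_simp
          ring
        · field_simp
          nlinarith [hΔ]

theorem coordinates_of_X_from_Y
    (a1 a2 b1 b2 c1 c2 d1 d2 : ℝ) (kA kB kC kD : ℝ)
    (A B C D : ℝ × ℝ)
    (hA : A = (a1, a2)) (hB : B = (b1, b2)) (hC : C = (c1, c2)) (hD : D = (d1, d2))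
    (hAB : A ≠ B) (hAC : A ≠ C) (hAD : A ≠ D)
    (hBC : B ≠ C) (hBD : B ≠ D) (hCD : C ≠ D)
    (habc : ¬ Collinear ℝ ({A, B, C} : Set (ℝ × ℝ)))
    (hkA : kA ≠ 0) (hkB : kB ≠ 0) (hkC : kC ≠ 0) (hkD : kD ≠ 0)
    (Δ : ℝ) (hΔ : Δ = (a1 - b1) * (a2 - c2) - (a2 - b2) * (a1 - c1))
    (X Y : ℝ × ℝ) (x1 x2 : ℝ) (hX : X = (x1, x2))
    (hsol : IsRealSol A B C D kA kB kC kD X Y) :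
    (kA * sq2 (Y - A) ≠ 1 ∧ kB * sq2 (Y - B) ≠ 1 ∧
     kC * sq2 (Y - C) ≠ 1 ∧ kD * sq2 (Y - D) ≠ 1) ∧
    x1 = (1 / (2 * Δ)) *
      ((Gamma kB B Y - Gamma kA A Y) * (a2 - c2)
        - (a2 - b2) * (Gamma kC C Y - Gamma kA A Y)) ∧
    x2 = (1 / (2 * Δ)) *
      ((a1 - b1) * (Gamma kC C Y - Gamma kA A Y)
        - (Gamma kB B Y - Gamma kA A Y) * (a1 - c1)) := by
  obtain ⟨⟨hXA, hXB, hXC, hXD⟩, ⟨hYA, hYB, hYC, hYD⟩, eA, eB, eC, eD⟩ := hsol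
  have pA := sq2_ne_zero (sub_ne_zero.mpr hXA)
  have pB := sq2_ne_zero (sub_ne_zero.mpr hXB)
  have pC := sq2_ne_zero (sub_ne_zero.mpr hXC)
  have pD := sq2_ne_zero (sub_ne_zero.mpr hXD)
  have qA := sq2_ne_zero (sub_ne_zero.mpr hYA)
  have qB := sq2_ne_zero (sub_ne_zero.mpr hYB)
  have qC := sq2_ne_zero (sub_ne_zero.mpr hYC)
  have qD := sq2_ne_zero (sub_ne_zero.mpr hYD)
  obtain ⟨hneA, hGA⟩ := key kA _ _ pA qA eA
  obtain ⟨hneB, hGB⟩ := key kB _ _ pB qB eB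
  obtain ⟨hneC, hGC⟩ := key kC _ _ pC qC eC
  obtain ⟨hneD, hGD⟩ := key kD _ _ pD qD eD
  refine ⟨⟨by intro h; exact hneA (by linarith [h]), by intro h; exact hneB (by linarith),
          by intro h; exact hneC (by linarith), by intro h; exact hneD (by linarith)⟩, ?_, ?_⟩ <;>
  · have hdet : Δ ≠ 0 := by
      rw [hΔ]; exact det_ne a1 a2 b1 b2 c1 c2 (by rw [hA, hB, hC] at habc; exact habc)
    have GA : Gamma kA A Y = sq2 (X - A) - sq2 A := by rw [Gamma, hGA]
    have GB : Gamma kB B Y = sq2 (X - B) - sq2 B := by rw [Gamma, hGB]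
    have GC : Gamma kC C Y = sq2 (X - C) - sq2 C := by rw [Gamma, hGC]
    rw [GA, GB, GC, hA, hB, hC, hX]
    simp only [sq2, Prod.mk_sub_mk, Prod.fst_sub, Prod.snd_sub]
    field_simp
    rw [hΔ]
    ring
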